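/- Let f : [0,T] × ℝ × ℝ → ℝ be continuously differentiable, 2π-periodic in x, compactly supported in v, and let E : [0,T] × ℝ → ℝ be continuously differentiable and 2π-periodic in x. Assume f satisfies the Vlasov equation ∂f/∂t + v ∂f/∂x − E(t,x) ∂f/∂v = 0 and E satisfies the Ampère law ∂E/∂t(t,x) = ∫_ℝ v f(t,x,v) dv (obtained by differentiating ∂E/∂x = 1 − ρ in time and using the Vlasov equation, with zero integration constant). Then the total energy 𝓔(t) = (1/2) ∫₀^{2π} ∫_ℝ v² f(t,x,v) dv dx + (1/2) ∫₀^{2π} E(t,x)² dx is constant on [0,T]. -/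

import Mathlib

open MeasureTheory

section EnergyAux1
open MeasureTheory intervalIntegral Set

lemma helperA {G D : ℝ → ℝ → ℝ} {a b : ℝ}
    (hG : Continuous (Function.uncurry G)) (hD : Continuous (Function.uncurry D))
    (hder : ∀ t x, HasDerivAt (fun s => G s x) (D t x) t) (t₀ : ℝ) :
    HasDerivAt (fun t => ∫ x in a..b, G t x) (∫ x in a..b, D t₀ x) t₀ := by
  obtain ⟨C, hC⟩ : ∃ C, ∀ p ∈ (Icc (t₀ - 1) (t₀ + 1)) ×ˢ (uIcc a b),
      ‖Function.uncurry D p‖ ≤ C := by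
    obtain ⟨C, hC⟩ := (isCompact_Icc.prod isCompact_uIcc).exists_bound_of_continuousOn
      hD.continuousOn
    exact ⟨C, hC⟩
  have := intervalIntegral.hasDerivAt_integral_of_dominated_loc_of_deriv_le
    (F := G) (F' := D) (x₀ := t₀) (a := a) (b := b) (μ := volume) (bound := fun _ => C)
    (Metric.ball_mem_nhds t₀ one_pos)
    (Filter.Eventually.of_forall fun t =>
      (hG.comp (continuous_const.prodMk continuous_id)).aestronglyMeasurable)
    ((hG.comp (continuous_const.prodMk continuous_id)).intervalIntegrable a b)
    ((hD.comp (continuous_const.prodMk continuous_id)).aestronglyMeasurable)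
    (Filter.Eventually.of_forall fun x hx t ht => by
      have : ((t, x) : ℝ × ℝ) ∈ (Icc (t₀ - 1) (t₀ + 1)) ×ˢ (uIcc a b) := by
        constructor
        · have := Metric.mem_ball.mp ht
          rw [Real.dist_eq] at this
          constructor <;> [linarith [abs_lt.mp this |>.1]; linarith [abs_lt.mp this |>.2]]
        · exact uIoc_subset_uIcc hx
      exact hC _ this)
    (intervalIntegrable_const)
    (Filter.Eventually.of_forall fun x hx t ht => hder t x)
  exact this.2

section Partials
variable {f : ℝ → ℝ → ℝ → ℝ} {E : ℝ → ℝ → ℝ}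

/-- partial derivatives of a 3-variable function -/
noncomputable def pt (f : ℝ → ℝ → ℝ → ℝ) (t x v : ℝ) : ℝ :=
  fderiv ℝ (fun p : ℝ × ℝ × ℝ => f p.1 p.2.1 p.2.2) (t, x, v) (1, 0, 0)
noncomputable def px (f : ℝ → ℝ → ℝ → ℝ) (t x v : ℝ) : ℝ :=
  fderiv ℝ (fun p : ℝ × ℝ × ℝ => f p.1 p.2.1 p.2.2) (t, x, v) (0, 1, 0)
noncomputable def pv (f : ℝ → ℝ → ℝ → ℝ) (t x v : ℝ) : ℝ :=
  fderiv ℝ (fun p : ℝ × ℝ × ℝ => f p.1 p.2.1 p.2.2) (t, x, v) (0, 0, 1)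
noncomputable def qt (E : ℝ → ℝ → ℝ) (t x : ℝ) : ℝ :=
  fderiv ℝ (fun p : ℝ × ℝ => E p.1 p.2) (t, x) (1, 0)

variable (hf : ContDiff ℝ 1 (fun p : ℝ × ℝ × ℝ => f p.1 p.2.1 p.2.2))
  (hE : ContDiff ℝ 1 (fun p : ℝ × ℝ => E p.1 p.2))

include hf in
lemma comp3 {c : ℝ → ℝ × ℝ × ℝ} {c' : ℝ × ℝ × ℝ} {s : ℝ}
    (hc : HasDerivAt c c' s) :
    HasDerivAt (fun s => f (c s).1 (c s).2.1 (c s).2.2)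
      (fderiv ℝ (fun p : ℝ × ℝ × ℝ => f p.1 p.2.1 p.2.2) (c s) c') s :=
  ((hf.differentiable one_ne_zero) (c s)).hasFDerivAt.comp_hasDerivAt s hc

include hf

lemma hasDerivAt_pt (t x v : ℝ) : HasDerivAt (fun s => f s x v) (pt f t x v) t := by
  have h : HasDerivAt (fun s : ℝ => ((s, x, v) : ℝ × ℝ × ℝ)) (1, 0, 0) t :=
    (hasDerivAt_id t).prodMk ((hasDerivAt_const t x).prodMk (hasDerivAt_const t v))
  exact comp3 hf h

lemma hasDerivAt_px (t x v : ℝ) : HasDerivAt (fun y => f t y v) (px f t x v) x := by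
  have h : HasDerivAt (fun y : ℝ => ((t, y, v) : ℝ × ℝ × ℝ)) (0, 1, 0) x :=
    (hasDerivAt_const x t).prodMk ((hasDerivAt_id x).prodMk (hasDerivAt_const x v))
  exact comp3 hf h

lemma hasDerivAt_pv (t x v : ℝ) : HasDerivAt (fun w => f t x w) (pv f t x v) v := by
  have h : HasDerivAt (fun w : ℝ => ((t, x, w) : ℝ × ℝ × ℝ)) (0, 0, 1) v :=
    (hasDerivAt_const v t).prodMk ((hasDerivAt_const v x).prodMk (hasDerivAt_id v))
  exact comp3 hf h

lemma cont_pt : Continuous (fun p : ℝ × ℝ × ℝ => pt f p.1 p.2.1 p.2.2) :=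
  (hf.continuous_fderiv one_ne_zero).clm_apply continuous_const
lemma cont_px : Continuous (fun p : ℝ × ℝ × ℝ => px f p.1 p.2.1 p.2.2) :=
  (hf.continuous_fderiv one_ne_zero).clm_apply continuous_const
lemma cont_pv : Continuous (fun p : ℝ × ℝ × ℝ => pv f p.1 p.2.1 p.2.2) :=
  (hf.continuous_fderiv one_ne_zero).clm_apply continuous_const

omit hf in include hE in
lemma hasDerivAt_qt (t x : ℝ) : HasDerivAt (fun s => E s x) (qt E t x) t := by
  have h : HasDerivAt (fun s : ℝ => ((s, x) : ℝ × ℝ)) (1, 0) t :=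
    (hasDerivAt_id t).prodMk (hasDerivAt_const t x)
  exact ((hE.differentiable one_ne_zero) (t, x)).hasFDerivAt.comp_hasDerivAt t h

omit hf in include hE in
lemma cont_qt : Continuous (fun p : ℝ × ℝ => qt E p.1 p.2) :=
  (hE.continuous_fderiv one_ne_zero).clm_apply continuous_const

end Partials

end EnergyAux1

section EnergyAux2
open MeasureTheory Set

/-- gluing two solutions of an ODE at a junction point -/
lemma ode_glue {w : ℝ → (ℝ × ℝ) → (ℝ × ℝ)} {γ₁ γ₂ : ℝ → ℝ × ℝ} {a b c : ℝ}
    (hab : a ≤ b) (hbc : b ≤ c)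
    (h₁ : ∀ s ∈ Icc a b, HasDerivWithinAt γ₁ (w s (γ₁ s)) (Icc a b) s)
    (h₂ : ∀ s ∈ Icc b c, HasDerivWithinAt γ₂ (w s (γ₂ s)) (Icc b c) s)
    (hj : γ₁ b = γ₂ b) :
    ∃ γ : ℝ → ℝ × ℝ, (∀ s ∈ Icc a b, γ s = γ₁ s) ∧ (∀ s ∈ Icc b c, γ s = γ₂ s) ∧
      ∀ s ∈ Icc a c, HasDerivWithinAt γ (w s (γ s)) (Icc a c) s := by
  classical
  refine ⟨fun s => if s ≤ b then γ₁ s else γ₂ s, ?_, ?_, ?_⟩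
  · intro s hs; simp [hs.2]
  · intro s hs
    by_cases h : s ≤ b
    · have : s = b := le_antisymm h hs.1
      simp [this, hj]
    · simp [h]
  · intro s hs
    set γ : ℝ → ℝ × ℝ := fun s => if s ≤ b then γ₁ s else γ₂ s with hγ
    have hIcc : Icc a b ∪ Icc b c = Icc a c := Icc_union_Icc_eq_Icc hab hbc
    have heq₂ : ∀ y ∈ Ici b, γ y = γ₂ y := by
      intro y hy
      by_cases h : y ≤ b
      · have : y = b := le_antisymm h hy
        simp [γ, this, hj]
      · simp [γ, h]
    have heq₁ : ∀ y ∈ Iic b, γ y = γ₁ y := by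
      intro y hy; simp [γ, mem_Iic.mp hy]
    rcases lt_trichotomy s b with hsb | hsb | hsb
    · -- s < b
    -- γ₁ solves within Icc a b; Icc a b ∈ 𝓝[Icc a c] s
      have hmem : Icc a b ∈ nhdsWithin s (Icc a c) := by
        have h1 : Iic b ∈ nhdsWithin s (Icc a c) :=
          mem_nhdsWithin_of_mem_nhds (Iic_mem_nhds hsb)
        have h2 : Icc a c ∈ nhdsWithin s (Icc a c) := self_mem_nhdsWithin
        exact Filter.mem_of_superset (Filter.inter_mem h2 h1) fun y hy => ⟨hy.1.1, hy.2⟩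
      have hbase := (h₁ s ⟨hs.1, hsb.le⟩).mono_of_mem_nhdsWithin hmem
      have : HasDerivWithinAt γ (w s (γ₁ s)) (Icc a c) s := by
        apply hbase.congr_of_eventuallyEq
        · filter_upwards [mem_nhdsWithin_of_mem_nhds (Iic_mem_nhds hsb)] with y hy
          exact heq₁ y hy
        · exact heq₁ s (le_of_lt hsb)
      have hval : γ s = γ₁ s := heq₁ s hsb.le
      show HasDerivWithinAt γ (w s (γ s)) (Icc a c) s
      rw [hval]; exact this
    · -- s = b
      have hsIcc1 : s ∈ Icc a b := ⟨hs.1, hsb.le⟩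
      have hsIcc2 : s ∈ Icc b c := ⟨hsb.ge, hs.2⟩
      have hvs : γ s = γ₁ s := heq₁ s (mem_Iic.mpr hsb.le)
      have hvs2 : γ s = γ₂ s := by rw [hvs, hsb, hj]
      have H1 : HasDerivWithinAt γ (w s (γ s)) (Icc a b) s := by
        rw [hvs]
        exact (h₁ s hsIcc1).congr (fun y hy => heq₁ y (mem_Iic.mpr hy.2)) hvs
      have H2 : HasDerivWithinAt γ (w s (γ s)) (Icc b c) s := by
        rw [hvs2]
        exact (h₂ s hsIcc2).congr (fun y hy => heq₂ y (mem_Ici.mpr hy.1)) hvs2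
      have H := H1.union H2
      rw [hIcc] at H
      show HasDerivWithinAt γ (w s (γ s)) (Icc a c) s
      exact H
    · -- b < s
      have hmem : Icc b c ∈ nhdsWithin s (Icc a c) := by
        have h1 : Ici b ∈ nhdsWithin s (Icc a c) :=
          mem_nhdsWithin_of_mem_nhds (Ici_mem_nhds hsb)
        have h2 : Icc a c ∈ nhdsWithin s (Icc a c) := self_mem_nhdsWithin
        exact Filter.mem_of_superset (Filter.inter_mem h2 h1) fun y hy => ⟨hy.2, hy.1.2⟩
      have hbase := (h₂ s ⟨hsb.le, hs.2⟩).mono_of_mem_nhdsWithin hmem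
      have : HasDerivWithinAt γ (w s (γ₂ s)) (Icc a c) s := by
        apply hbase.congr_of_eventuallyEq
        · filter_upwards [mem_nhdsWithin_of_mem_nhds (Ici_mem_nhds hsb)] with y hy
          exact heq₂ y hy
        · exact heq₂ s hsb.le
      have hval : γ s = γ₂ s := heq₂ s hsb.le
      show HasDerivWithinAt γ (w s (γ s)) (Icc a c) s
      rw [hval]; exact this

lemma hasDerivWithinAt_singleton' {f : ℝ → ℝ × ℝ} {v : ℝ × ℝ} (x : ℝ) :
    HasDerivWithinAt f v {x} x := by
  rw [hasDerivWithinAt_iff_hasFDerivWithinAt]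
  simp only [HasFDerivWithinAt, nhdsWithin_singleton, hasFDerivAtFilter_iff_isLittleO,
    Asymptotics.isLittleO_pure]
  simp

lemma ode_step (T : ℝ) {w : ℝ → (ℝ × ℝ) → (ℝ × ℝ)} {K : NNReal} {M : ℝ} (hM : 0 ≤ M)
    (hcont : ∀ p, ContinuousOn (fun s => w s p) (Icc 0 T))
    (hlip : ∀ s ∈ Icc 0 T, LipschitzWith K (w s))
    (hgrow : ∀ s ∈ Icc 0 T, ∀ p, ‖w s p‖ ≤ ‖p‖ + M) :
    ∀ t₁ ∈ Icc 0 T, ∀ p₁ : ℝ × ℝ, ∃ γ, γ t₁ = p₁ ∧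
      ∀ s ∈ Icc (max 0 (t₁ - 1/2)) (min T (t₁ + 1/2)),
        HasDerivWithinAt γ (w s (γ s)) (Icc (max 0 (t₁ - 1/2)) (min T (t₁ + 1/2))) s := by
  intro t₁ ht₁ p₁
  have hsub : Icc (max 0 (t₁ - 1/2)) (min T (t₁ + 1/2)) ⊆ Icc 0 T := fun s hs =>
    ⟨le_trans (le_max_left _ _) hs.1, le_trans hs.2 (min_le_left _ _)⟩
  have hpl : IsPicardLindelof w (tmin := max 0 (t₁ - 1/2)) (tmax := min T (t₁ + 1/2))
      ⟨t₁, ⟨max_le ht₁.1 (by linarith), le_min ht₁.2 (by linarith)⟩⟩ p₁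
      ⟨‖p₁‖ + M + 1, by positivity⟩ 0 ⟨2 * ‖p₁‖ + 2 * M + 1, by positivity⟩ K := by
    constructor
    · intro s hs
      exact (hlip s (hsub hs)).lipschitzOnWith
    · intro p _
      exact fun s hs => ((hcont p).mono hsub) s hs
    · intro s hs p hp
      have h1 := hgrow s (hsub hs) p
      have h2 : ‖p‖ ≤ ‖p₁‖ + (‖p₁‖ + M + 1) := norm_le_of_mem_closedBall hp
      show ‖w s p‖ ≤ 2 * ‖p₁‖ + 2 * M + 1
      linarith
    · have h1 : min T (t₁ + 1/2) - t₁ ≤ 1/2 := by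
        have := min_le_right T (t₁ + 1/2); linarith
      have h2 : t₁ - max 0 (t₁ - 1/2) ≤ 1/2 := by
        have := le_max_right (0:ℝ) (t₁ - 1/2); linarith
      have h3 : max (min T (t₁ + 1/2) - t₁) (t₁ - max 0 (t₁ - 1/2)) ≤ 1/2 := max_le h1 h2
      have h4 : (0:ℝ) ≤ 2 * ‖p₁‖ + 2 * M + 1 := by positivity
      have hcalc : (2 * ‖p₁‖ + 2 * M + 1) * max (min T (t₁ + 1/2) - t₁) (t₁ - max 0 (t₁ - 1/2))
          ≤ ‖p₁‖ + M + 1 := by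
        calc (2 * ‖p₁‖ + 2 * M + 1) * max (min T (t₁ + 1/2) - t₁) (t₁ - max 0 (t₁ - 1/2))
            ≤ (2 * ‖p₁‖ + 2 * M + 1) * (1/2) := by
              apply mul_le_mul_of_nonneg_left h3 h4
          _ ≤ ‖p₁‖ + M + 1 := by linarith
      exact hcalc.trans (le_of_eq (by simp; rfl))
  exact hpl.exists_eq_forall_mem_Icc_hasDerivWithinAt₀

lemma aux_max (u c : ℝ) (hc : 0 ≤ c) : max 0 (max 0 u - c) = max 0 (u - c) := by
  rcases le_total u 0 with h | h
  · rw [max_eq_left h, max_eq_left (by linarith), max_eq_left (by linarith)]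
  · rw [max_eq_right h]

lemma aux_min (T u c : ℝ) (hc : 0 ≤ c) : min T (min T u + c) = min T (u + c) := by
  rcases le_total u T with h | h
  · rw [min_eq_right h]
  · rw [min_eq_left h, min_eq_left (by linarith), min_eq_left (by linarith)]

lemma ode_global (T : ℝ) {w : ℝ → (ℝ × ℝ) → (ℝ × ℝ)} {K : NNReal} {M : ℝ} (hM : 0 ≤ M)
    (hcont : ∀ p, ContinuousOn (fun s => w s p) (Icc 0 T))
    (hlip : ∀ s ∈ Icc 0 T, LipschitzWith K (w s))
    (hgrow : ∀ s ∈ Icc 0 T, ∀ p, ‖w s p‖ ≤ ‖p‖ + M) :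
    ∀ t₀ ∈ Icc 0 T, ∀ p₀ : ℝ × ℝ, ∃ γ, γ t₀ = p₀ ∧
      ∀ s ∈ Icc 0 T, HasDerivWithinAt γ (w s (γ s)) (Icc 0 T) s := by
  intro t₀ ht₀ p₀
  have main : ∀ n : ℕ, ∃ γ, γ t₀ = p₀ ∧
      ∀ s ∈ Icc (max 0 (t₀ - n/2)) (min T (t₀ + n/2)),
        HasDerivWithinAt γ (w s (γ s)) (Icc (max 0 (t₀ - n/2)) (min T (t₀ + n/2))) s := by
    intro n
    induction n with
    | zero =>
      refine ⟨fun _ => p₀, rfl, ?_⟩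
      have e1 : max 0 (t₀ - (0:ℕ)/2) = t₀ := by
        simp only [Nat.cast_zero, zero_div, sub_zero]
        exact max_eq_right ht₀.1
      have e2 : min T (t₀ + (0:ℕ)/2) = t₀ := by
        simp only [Nat.cast_zero, zero_div, add_zero]
        exact min_eq_right ht₀.2
      rw [e1, e2, Set.Icc_self]
      intro s hs
      rw [Set.mem_singleton_iff] at hs
      subst hs
      exact hasDerivWithinAt_singleton' s
    | succ n ih =>
      obtain ⟨γ, hγ0, hγ⟩ := ih
      set a := max 0 (t₀ - n/2) with ha
      set b := min T (t₀ + n/2) with hb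
      have hn2 : (0:ℝ) ≤ (n:ℝ)/2 := by positivity
      have haT : a ∈ Icc 0 T := ⟨le_max_left _ _, max_le (ht₀.1.trans ht₀.2) (by linarith [ht₀.2])⟩
      have hbT : b ∈ Icc 0 T := ⟨le_min (ht₀.1.trans ht₀.2) (by linarith [ht₀.1]), min_le_left _ _⟩
      have h1 : a ≤ t₀ := max_le ht₀.1 (by linarith)
      have h2 : t₀ ≤ b := le_min ht₀.2 (by linarith)
      have hab : a ≤ b := h1.trans h2
      set a' := max 0 (t₀ - (n+1:ℕ)/2) with ha'
      set b' := min T (t₀ + (n+1:ℕ)/2) with hb'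
      have hA : a' = max 0 (a - 1/2) := by
        rw [ha', ha, aux_max _ _ (by norm_num)]
        congr 1
        push_cast
        ring
      have hB : b' = min T (b + 1/2) := by
        rw [hb', hb, aux_min _ _ _ (by norm_num)]
        congr 1
        push_cast
        ring
      have ha'a : a' ≤ a := by
        rw [hA]; exact max_le haT.1 (by linarith)
      have hbb' : b ≤ b' := by
        rw [hB]; exact le_min hbT.2 (by linarith)
      -- extend to the left
      obtain ⟨γL, hγL0, hγL⟩ := ode_step T hM hcont hlip hgrow a haT (γ a)
      have hsubL : Icc a' a ⊆ Icc (max 0 (a - 1/2)) (min T (a + 1/2)) := by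
        rw [← hA]
        exact Icc_subset_Icc le_rfl (le_min haT.2 (by linarith))
      have hγL' : ∀ s ∈ Icc a' a, HasDerivWithinAt γL (w s (γL s)) (Icc a' a) s :=
        fun s hs => (hγL s (hsubL hs)).mono hsubL
      obtain ⟨γ₁, hγ₁L, hγ₁M, hγ₁⟩ := ode_glue ha'a hab hγL' hγ hγL0
      -- extend to the right
      obtain ⟨γR, hγR0, hγR⟩ := ode_step T hM hcont hlip hgrow b hbT (γ₁ b)
      have hsubR : Icc b b' ⊆ Icc (max 0 (b - 1/2)) (min T (b + 1/2)) := by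
        rw [← hB]
        exact Icc_subset_Icc (max_le hbT.1 (by linarith)) le_rfl
      have hγR' : ∀ s ∈ Icc b b', HasDerivWithinAt γR (w s (γR s)) (Icc b b') s :=
        fun s hs => (hγR s (hsubR hs)).mono hsubR
      obtain ⟨γ₂, hγ₂L, hγ₂R, hγ₂⟩ := ode_glue (ha'a.trans hab) hbb' hγ₁ hγR' hγR0.symm
      refine ⟨γ₂, ?_, hγ₂⟩
      have ht₀' : t₀ ∈ Icc a' b := ⟨ha'a.trans h1, h2⟩
      rw [hγ₂L t₀ ht₀', hγ₁M t₀ ⟨h1, h2⟩, hγ0]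
  obtain ⟨n, hn⟩ := exists_nat_gt (2 * T)
  obtain ⟨γ, hγ0, hγ⟩ := main n
  have e1 : max 0 (t₀ - n/2) = 0 := max_eq_left (by linarith [ht₀.2])
  have e2 : min T (t₀ + n/2) = T := min_eq_left (by linarith [ht₀.1])
  rw [e1, e2] at hγ
  exact ⟨γ, hγ0, hγ⟩


noncomputable def qx (E : ℝ → ℝ → ℝ) (t x : ℝ) : ℝ :=
  fderiv ℝ (fun p : ℝ × ℝ => E p.1 p.2) (t, x) (0, 1)

lemma hasDerivAt_qx {E : ℝ → ℝ → ℝ} (hE : ContDiff ℝ 1 (fun p : ℝ × ℝ => E p.1 p.2))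
    (t x : ℝ) : HasDerivAt (fun y => E t y) (qx E t x) x := by
  have h : HasDerivAt (fun y : ℝ => ((t, y) : ℝ × ℝ)) (0, 1) x :=
    (hasDerivAt_const x t).prodMk (hasDerivAt_id x)
  exact ((hE.differentiable one_ne_zero) (t, x)).hasFDerivAt.comp_hasDerivAt x h

lemma cont_qx {E : ℝ → ℝ → ℝ} (hE : ContDiff ℝ 1 (fun p : ℝ × ℝ => E p.1 p.2)) :
    Continuous (fun p : ℝ × ℝ => qx E p.1 p.2) :=
  (hE.continuous_fderiv one_ne_zero).clm_apply continuous_const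

lemma qx_per {E : ℝ → ℝ → ℝ} (hE : ContDiff ℝ 1 (fun p : ℝ × ℝ => E p.1 p.2))
    (hEper : ∀ t x : ℝ, E t (x + 2 * Real.pi) = E t x) (t x : ℝ) :
    qx E t (x + 2 * Real.pi) = qx E t x := by
  have h1 : HasDerivAt (fun y => E t y) (qx E t (x + 2 * Real.pi)) (x + 2 * Real.pi) :=
    hasDerivAt_qx hE t (x + 2 * Real.pi)
  have hshift : HasDerivAt (fun y : ℝ => y + 2 * Real.pi) 1 x := (hasDerivAt_id x).add_const _
  have h2 : HasDerivAt (fun y => E t (y + 2 * Real.pi)) (qx E t (x + 2 * Real.pi)) x := by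
    simpa [Function.comp_def] using h1.comp x hshift
  have h3 : (fun y => E t (y + 2 * Real.pi)) = fun y => E t y := funext fun y => hEper t y
  rw [h3] at h2
  exact h2.unique (hasDerivAt_qx hE t x)

/-- A continuous function periodic in the second variable is bounded on a time slab. -/
lemma periodic_bound (T : ℝ) (g : ℝ → ℝ → ℝ) (hg : Continuous fun p : ℝ × ℝ => g p.1 p.2)
    (hper : ∀ t x, g t (x + 2 * Real.pi) = g t x) :
    ∃ M : ℝ, 0 ≤ M ∧ ∀ t ∈ Icc (0:ℝ) T, ∀ x, |g t x| ≤ M := by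
  obtain ⟨C, hC⟩ := (isCompact_Icc (a := (0:ℝ)) (b := T)|>.prod
    (isCompact_Icc (a := (0:ℝ)) (b := 2 * Real.pi))).exists_bound_of_continuousOn
    hg.continuousOn
  refine ⟨max C 0, le_max_right _ _, ?_⟩
  intro t ht x
  have hπ : 0 < 2 * Real.pi := by positivity
  have hper' : Function.Periodic (g t) (2 * Real.pi) := fun u => hper t u
  set k : ℤ := ⌊x / (2 * Real.pi)⌋ with hk
  have h1 : 0 ≤ x - k * (2 * Real.pi) := Int.sub_floor_div_mul_nonneg x hπ
  have h2 : x - k * (2 * Real.pi) < 2 * Real.pi := Int.sub_floor_div_mul_lt x hπ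
  have heq : g t (x - k * (2 * Real.pi)) = g t x := hper'.sub_int_mul_eq k
  rw [← heq]
  calc |g t (x - k * (2 * Real.pi))| ≤ C :=
        hC (t, x - k * (2 * Real.pi)) ⟨ht, ⟨h1, h2.le⟩⟩
    _ ≤ max C 0 := le_max_left _ _

set_option maxHeartbeats 1000000 in
lemma uniform_support (T : ℝ) (hT : 0 < T) (f : ℝ → ℝ → ℝ → ℝ) (E : ℝ → ℝ → ℝ)
    (hf : ContDiff ℝ 1 (fun p : ℝ × ℝ × ℝ => f p.1 p.2.1 p.2.2))
    (hfper : ∀ t x v : ℝ, f t (x + 2 * Real.pi) v = f t x v)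
    (hsupp : ∀ t x : ℝ, HasCompactSupport (fun v => f t x v))
    (hE : ContDiff ℝ 1 (fun p : ℝ × ℝ => E p.1 p.2))
    (hEper : ∀ t x : ℝ, E t (x + 2 * Real.pi) = E t x)
    (hVlasov : ∀ t ∈ Set.Icc (0 : ℝ) T, ∀ x v : ℝ,
      deriv (fun s => f s x v) t + v * deriv (fun y => f t y v) x
        - E t x * deriv (fun w => f t x w) v = 0) :
    ∃ R : ℝ, 0 < R ∧ ∀ t ∈ Set.Icc (0:ℝ) T, ∀ x v : ℝ, R ≤ |v| → f t x v = 0 := by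
  have hπ : 0 < Real.pi := Real.pi_pos
  have hfc : Continuous (fun p : ℝ × ℝ × ℝ => f p.1 p.2.1 p.2.2) := hf.continuous
  have hEc : Continuous (fun p : ℝ × ℝ => E p.1 p.2) := hE.continuous
  obtain ⟨M, hM0, hM⟩ := periodic_bound T E hEc hEper
  obtain ⟨L, hL0, hL⟩ := periodic_bound T (qx E) (cont_qx hE) (qx_per hE hEper)
  -- the characteristic vector field
  set w : ℝ → (ℝ × ℝ) → (ℝ × ℝ) := fun s p => (p.2, -E s p.1) with hw
  -- Lipschitz constant
  set K : NNReal := Real.toNNReal (max 1 L) with hK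
  have hKcoe : (K : ℝ) = max 1 L := Real.coe_toNNReal _ (le_trans zero_le_one (le_max_left _ _))
  have hElip : ∀ s ∈ Icc (0:ℝ) T, ∀ x y : ℝ, |E s x - E s y| ≤ L * |x - y| := by
    intro s hs x y
    have := Convex.norm_image_sub_le_of_norm_hasDerivWithin_le
      (f := fun u => E s u) (f' := fun u => qx E s u) (s := univ) (C := L)
      (fun u _ => (hasDerivAt_qx hE s u).hasDerivWithinAt)
      (fun u _ => hL s hs u) convex_univ (mem_univ y) (mem_univ x)
    simpa [Real.norm_eq_abs] using this
  have hlip : ∀ s ∈ Icc (0:ℝ) T, LipschitzWith K (w s) := by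
    intro s hs
    apply LipschitzWith.of_dist_le_mul
    intro p q
    rw [Prod.dist_eq, Prod.dist_eq]
    have hd1 : dist p.2 q.2 ≤ (K : ℝ) * max (dist p.1 q.1) (dist p.2 q.2) := by
      have h1 : (1:ℝ) ≤ (K:ℝ) := by rw [hKcoe]; exact le_max_left _ _
      nlinarith [le_max_right (dist p.1 q.1) (dist p.2 q.2), dist_nonneg (x := p.2) (y := q.2),
        dist_nonneg (x := p.1) (y := q.1)]
    have hd2 : dist (-E s p.1) (-E s q.1) ≤ (K : ℝ) * max (dist p.1 q.1) (dist p.2 q.2) := by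
      rw [Real.dist_eq]
      have h1 : |(-E s p.1) - (-E s q.1)| = |E s p.1 - E s q.1| := by
        rw [← abs_neg]; congr 1; ring
      rw [h1]
      calc |E s p.1 - E s q.1| ≤ L * |p.1 - q.1| := hElip s hs p.1 q.1
        _ ≤ (K : ℝ) * max (dist p.1 q.1) (dist p.2 q.2) := by
            rw [hKcoe]
            have h2 : |p.1 - q.1| = dist p.1 q.1 := (Real.dist_eq _ _).symm
            rw [h2]
            have := le_max_left (dist p.1 q.1) (dist p.2 q.2)
            nlinarith [dist_nonneg (x := p.1) (y := q.1), le_max_right (1:ℝ) L,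
              dist_nonneg (x := p.2) (y := q.2)]
    exact max_le hd1 hd2
  have hgrow : ∀ s ∈ Icc (0:ℝ) T, ∀ p : ℝ × ℝ, ‖w s p‖ ≤ ‖p‖ + M := by
    intro s hs p
    rw [Prod.norm_def]
    apply max_le
    · calc ‖p.2‖ ≤ ‖p‖ := norm_snd_le p
        _ ≤ ‖p‖ + M := by linarith
    · calc ‖-E s p.1‖ = |E s p.1| := by rw [norm_neg, Real.norm_eq_abs]
        _ ≤ M := hM s hs p.1
        _ ≤ ‖p‖ + M := by nlinarith [norm_nonneg p]
  -- Baire category: a locally uniform support window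
  haveI : CompleteSpace (Icc (0:ℝ) T) := isClosed_Icc.completeSpace_coe
  haveI : Nonempty (Icc (0:ℝ) T) := ⟨⟨0, ⟨le_refl _, hT.le⟩⟩⟩
  set F : ℕ → Set ((Icc (0:ℝ) T) × ℝ) :=
    fun n => {p | ∀ v : ℝ, (n:ℝ) ≤ |v| → f (p.1 : ℝ) p.2 v = 0} with hF
  have hFclosed : ∀ n, IsClosed (F n) := by
    intro n
    have : F n = ⋂ (v : ℝ), ⋂ (_ : (n:ℝ) ≤ |v|),
        {p : (Icc (0:ℝ) T) × ℝ | f (p.1 : ℝ) p.2 v = 0} := by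
      ext p
      simp [hF, Set.mem_iInter]
    rw [this]
    refine isClosed_iInter fun v => isClosed_iInter fun _ => isClosed_eq ?_ continuous_const
    exact hfc.comp (((continuous_subtype_val.comp continuous_fst).prodMk
      (continuous_snd.prodMk continuous_const)))
  have hFcover : ⋃ n, F n = univ := by
    ext p
    simp only [Set.mem_iUnion, Set.mem_univ, iff_true]
    obtain ⟨r, hr⟩ := ((hsupp (p.1 : ℝ) p.2).isBounded).subset_closedBall 0
    refine ⟨⌈max r 0⌉₊ + 1, ?_⟩
    intro v hv
    apply image_eq_zero_of_notMem_tsupport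
    intro hmem
    have h1 : |v| ≤ r := by
      have := hr hmem
      simpa [Real.dist_eq] using this
    have h2 : max r 0 ≤ (⌈max r 0⌉₊ : ℝ) := Nat.le_ceil _
    have h3 : ((⌈max r 0⌉₊ + 1 : ℕ) : ℝ) ≤ |v| := hv
    push_cast at h3
    have h4 : r ≤ max r 0 := le_max_left _ _
    linarith
  obtain ⟨N, hN⟩ := nonempty_interior_of_iUnion_of_closed hFclosed hFcover
  obtain ⟨p₀, hp₀⟩ := hN
  obtain ⟨ε, hε, hball⟩ := Metric.isOpen_iff.mp isOpen_interior p₀ hp₀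
  set t₁ : ℝ := (p₀.1 : ℝ) with ht₁def
  set x₁ : ℝ := p₀.2 with hx₁def
  have ht₁ : t₁ ∈ Icc (0:ℝ) T := p₀.1.2
  have hzero : ∀ s, ∀ hs : s ∈ Icc (0:ℝ) T, |s - t₁| < ε →
      ∀ u, |u - x₁| < ε → ∀ v : ℝ, (N:ℝ) ≤ |v| → f s u v = 0 := by
    intro s hs hst u hu v hv
    have hq : ((⟨s, hs⟩, u) : (Icc (0:ℝ) T) × ℝ) ∈ Metric.ball p₀ ε := by
      rw [Metric.mem_ball, Prod.dist_eq]
      apply max_lt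
      · rw [Subtype.dist_eq, Real.dist_eq]
        exact hst
      · rw [Real.dist_eq]
        exact hu
    exact interior_subset (hball hq) v hv
  -- the time-space window
  set a : ℝ := max 0 (t₁ - ε/2) with hadef
  set b : ℝ := min T (t₁ + ε/2) with hbdef
  have hab : a < b := by
    apply max_lt
    · exact lt_min hT (by nlinarith [ht₁.1])
    · apply lt_min (by nlinarith [ht₁.2]) (by nlinarith)
  have hsub : Icc a b ⊆ Icc (0:ℝ) T := fun s hs =>
    ⟨le_trans (le_max_left _ _) hs.1, le_trans hs.2 (min_le_left _ _)⟩
  have hclose : ∀ s ∈ Icc a b, |s - t₁| < ε := by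
    intro s hs
    have h1 : t₁ - ε/2 ≤ s := le_trans (le_max_right _ _) hs.1
    have h2 : s ≤ t₁ + ε/2 := le_trans hs.2 (min_le_right _ _)
    rw [abs_lt]
    constructor <;> nlinarith
  have hba : (0:ℝ) < b - a := sub_pos.mpr hab
  have hπ2 : (0:ℝ) < 2 * Real.pi := by positivity
  -- the uniform support radius
  refine ⟨(N:ℝ) + M * T + (2 * Real.pi) / (b - a) + 1, ?_, ?_⟩
  · have h1 : (0:ℝ) ≤ (N:ℝ) := Nat.cast_nonneg _
    have h2 : (0:ℝ) ≤ M * T := mul_nonneg hM0 hT.le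
    have h3 : (0:ℝ) < (2 * Real.pi) / (b - a) := div_pos hπ2 hba
    linarith
  intro t₀ ht₀ x₀ v₀ hv₀
  set R : ℝ := (N:ℝ) + M * T + (2 * Real.pi) / (b - a) + 1 with hRdef
  -- the characteristic through (t₀, x₀, v₀)
  have hwcont : ∀ p : ℝ × ℝ, ContinuousOn (fun s => w s p) (Icc (0:ℝ) T) := by
    intro p
    exact (continuous_const.prodMk
      ((hEc.comp (continuous_id.prodMk continuous_const)).neg)).continuousOn
  obtain ⟨γ, hγ0, hγ⟩ := ode_global T hM0 hwcont hlip hgrow t₀ ht₀ (x₀, v₀)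
  set X : ℝ → ℝ := fun s => (γ s).1 with hXdef
  set V : ℝ → ℝ := fun s => (γ s).2 with hVdef
  have hX0 : X t₀ = x₀ := by rw [hXdef]; simp [hγ0]
  have hV0 : V t₀ = v₀ := by rw [hVdef]; simp [hγ0]
  have hXd : ∀ s ∈ Icc (0:ℝ) T, HasDerivWithinAt X (V s) (Icc (0:ℝ) T) s := by
    intro s hs
    have h := (ContinuousLinearMap.fst ℝ ℝ ℝ).hasFDerivAt.comp_hasDerivWithinAt s (hγ s hs)
    exact h
  have hVd : ∀ s ∈ Icc (0:ℝ) T, HasDerivWithinAt V (-E s (X s)) (Icc (0:ℝ) T) s := by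
    intro s hs
    have h := (ContinuousLinearMap.snd ℝ ℝ ℝ).hasFDerivAt.comp_hasDerivWithinAt s (hγ s hs)
    exact h
  -- velocity bound along the characteristic
  have hVbound : ∀ s ∈ Icc (0:ℝ) T, |V s - v₀| ≤ M * T := by
    intro s hs
    have hMVT := Convex.norm_image_sub_le_of_norm_hasDerivWithin_le
      (f := V) (f' := fun u => -E u (X u)) (s := Icc (0:ℝ) T) (C := M)
      hVd (fun u hu => by
        rw [norm_neg, Real.norm_eq_abs]; exact hM u hu (X u)) (convex_Icc _ _) ht₀ hs
    rw [hV0] at hMVT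
    have habs : ‖s - t₀‖ ≤ T := by
      rw [Real.norm_eq_abs, abs_le]
      exact ⟨by linarith [hs.1, ht₀.2], by linarith [hs.2, ht₀.1]⟩
    calc |V s - v₀| = ‖V s - v₀‖ := (Real.norm_eq_abs _).symm
      _ ≤ M * ‖s - t₀‖ := hMVT
      _ ≤ M * T := mul_le_mul_of_nonneg_left habs hM0
  -- f is constant along the characteristic
  have hconst : ∀ s ∈ Icc (0:ℝ) T, f s (X s) (V s) = f t₀ x₀ v₀ := by
    have hexpand : ∀ (t' x' v' a' b' : ℝ),
        fderiv ℝ (fun p : ℝ × ℝ × ℝ => f p.1 p.2.1 p.2.2) (t', x', v') (1, a', b')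
          = pt f t' x' v' + a' * px f t' x' v' + b' * pv f t' x' v' := by
      intro t' x' v' a' b'
      have h1 : ((1:ℝ), a', b') = ((1:ℝ), (0:ℝ), (0:ℝ)) + a' • ((0:ℝ), (1:ℝ), (0:ℝ))
          + b' • ((0:ℝ), (0:ℝ), (1:ℝ)) := by
        simp [Prod.ext_iff]
      rw [h1, map_add, map_add, _root_.map_smul, _root_.map_smul]
      simp only [smul_eq_mul]
      rfl
    have hφd : ∀ s ∈ Icc (0:ℝ) T,
        HasDerivWithinAt (fun u => f u (X u) (V u)) 0 (Icc (0:ℝ) T) s := by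
      intro s hs
      have hc : HasDerivWithinAt (fun u => ((u, X u, V u) : ℝ × ℝ × ℝ))
          ((1 : ℝ), V s, -E s (X s)) (Icc (0:ℝ) T) s :=
        ((hasDerivAt_id s).hasDerivWithinAt).prodMk ((hXd s hs).prodMk (hVd s hs))
      have hcomp := ((hf.differentiable one_ne_zero) (s, X s, V s)).hasFDerivAt.comp_hasDerivWithinAt
        s hc
      have hVl := hVlasov s hs (X s) (V s)
      rw [(hasDerivAt_pt hf s (X s) (V s)).deriv, (hasDerivAt_px hf s (X s) (V s)).deriv,
        (hasDerivAt_pv hf s (X s) (V s)).deriv] at hVl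
      have h0 : fderiv ℝ (fun p : ℝ × ℝ × ℝ => f p.1 p.2.1 p.2.2) (s, X s, V s)
          (1, V s, -E s (X s)) = 0 := by
        rw [hexpand]
        linarith
      rw [h0] at hcomp
      exact hcomp
    intro s hs
    have hMVT := Convex.norm_image_sub_le_of_norm_hasDerivWithin_le
      (f := fun u => f u (X u) (V u)) (f' := fun _ => 0) (s := Icc (0:ℝ) T) (C := 0)
      hφd (fun u _ => by simp) (convex_Icc _ _) ht₀ hs
    rw [zero_mul] at hMVT
    have h9 := norm_le_zero_iff.mp hMVT
    rw [sub_eq_zero] at h9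
    rw [h9, hX0, hV0]
  -- continuity of X on the window
  have hXcont : ContinuousOn X (Icc a b) := fun s hs =>
    ((hXd s (hsub hs)).continuousWithinAt).mono hsub
  -- covering estimate
  have hMVTX := Convex.norm_image_sub_le_of_norm_hasDerivWithin_le
    (f := fun u => X u - v₀ * u) (f' := fun u => V u - v₀) (s := Icc (0:ℝ) T) (C := M * T)
    (fun u hu => (hXd u hu).sub (by
      simpa using ((hasDerivAt_id u).const_mul v₀).hasDerivWithinAt))
    (fun u hu => by rw [Real.norm_eq_abs]; exact hVbound u hu) (convex_Icc _ _)
    (hsub (left_mem_Icc.mpr hab.le)) (hsub (right_mem_Icc.mpr hab.le))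
  rw [Real.norm_eq_abs, Real.norm_eq_abs, abs_of_pos hba] at hMVTX
  have hXmove : |X b - v₀ * b - (X a - v₀ * a)| ≤ M * T * (b - a) := hMVTX
  have habs2 : ∀ s ∈ Icc (0:ℝ) T, (N:ℝ) ≤ |V s| := by
    intro s hs
    have h1 := hVbound s hs
    have h2 := abs_le.mp h1
    have h3 : (0:ℝ) ≤ (2 * Real.pi) / (b - a) := (div_pos hπ2 hba).le
    rcases le_abs.mp hv₀ with h | h
    · have : (N:ℝ) ≤ V s := by rw [hRdef] at h; linarith [h2.1]
      exact this.trans (le_abs_self _)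
    · have : (N:ℝ) ≤ -V s := by rw [hRdef] at h; linarith [h2.2]
      exact this.trans (neg_le_abs _)
  rcases le_abs.mp hv₀ with hcase | hcase
  · -- v₀ ≥ R : rightward motion
    have hcover : X a + 2 * Real.pi ≤ X b := by
      have h1 : 2 * Real.pi / (b - a) ≤ v₀ - M * T := by rw [hRdef] at hcase; linarith
      have h2 := mul_le_mul_of_nonneg_right h1 hba.le
      rw [div_mul_cancel₀ _ hba.ne'] at h2
      have h3 := abs_le.mp hXmove
      nlinarith [h3.1]
    set k : ℤ := ⌈(X a - x₁) / (2 * Real.pi)⌉ with hkdef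
    set y : ℝ := x₁ + 2 * Real.pi * k with hydef
    have hy1 : X a ≤ y := by
      have h1 := Int.le_ceil ((X a - x₁) / (2 * Real.pi))
      rw [div_le_iff₀ hπ2] at h1
      rw [hydef]; linarith
    have hy2 : y ≤ X b := by
      have h1 := Int.ceil_lt_add_one ((X a - x₁) / (2 * Real.pi))
      rw [← hkdef] at h1
      have h2 : (k:ℝ) * (2 * Real.pi) < X a - x₁ + 2 * Real.pi := by
        have := mul_lt_mul_of_pos_right h1 hπ2
        rw [add_mul, one_mul, div_mul_cancel₀ _ hπ2.ne'] at this
        linarith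
      rw [hydef]; nlinarith
    obtain ⟨s₂, hs₂, hXs₂⟩ := intermediate_value_Icc hab.le hXcont ⟨hy1, hy2⟩
    have hper2 : Function.Periodic (fun u => f s₂ u (V s₂)) (2 * Real.pi) :=
      fun u => hfper s₂ u (V s₂)
    have hshift : f s₂ y (V s₂) = f s₂ x₁ (V s₂) := by
      have := hper2.sub_int_mul_eq (x := y) (n := k)
      have harg : y - k * (2 * Real.pi) = x₁ := by rw [hydef]; ring
      rw [harg] at this
      exact this.symm
    have hzero2 := hzero s₂ (hsub hs₂) (hclose s₂ hs₂) x₁ (by simpa using hε)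
      (V s₂) (habs2 s₂ (hsub hs₂))
    calc f t₀ x₀ v₀ = f s₂ (X s₂) (V s₂) := (hconst s₂ (hsub hs₂)).symm
      _ = f s₂ y (V s₂) := by rw [hXs₂]
      _ = f s₂ x₁ (V s₂) := hshift
      _ = 0 := hzero2
  · -- v₀ ≤ -R : leftward motion
    have hcover : X b ≤ X a - 2 * Real.pi := by
      have h1 : v₀ + M * T ≤ -(2 * Real.pi / (b - a)) := by rw [hRdef] at hcase; linarith
      have h2 := mul_le_mul_of_nonneg_right h1 hba.le
      rw [neg_mul, div_mul_cancel₀ _ hba.ne'] at h2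
      have h3 := abs_le.mp hXmove
      nlinarith [h3.2]
    set k : ℤ := ⌊(X a - x₁) / (2 * Real.pi)⌋ with hkdef
    set y : ℝ := x₁ + 2 * Real.pi * k with hydef
    have hy1 : y ≤ X a := by
      have h1 := Int.floor_le ((X a - x₁) / (2 * Real.pi))
      rw [le_div_iff₀ hπ2] at h1
      rw [hydef]; linarith
    have hy2 : X b ≤ y := by
      have h1 := Int.lt_floor_add_one ((X a - x₁) / (2 * Real.pi))
      rw [← hkdef] at h1
      have h2 : X a - x₁ < ((k:ℝ) + 1) * (2 * Real.pi) := by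
        have := mul_lt_mul_of_pos_right h1 hπ2
        rw [div_mul_cancel₀ _ hπ2.ne'] at this
        linarith
      rw [hydef]; nlinarith
    obtain ⟨s₂, hs₂, hXs₂⟩ := intermediate_value_Icc' hab.le hXcont ⟨hy2, hy1⟩
    have hper2 : Function.Periodic (fun u => f s₂ u (V s₂)) (2 * Real.pi) :=
      fun u => hfper s₂ u (V s₂)
    have hshift : f s₂ y (V s₂) = f s₂ x₁ (V s₂) := by
      have := hper2.sub_int_mul_eq (x := y) (n := k)
      have harg : y - k * (2 * Real.pi) = x₁ := by rw [hydef]; ring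
      rw [harg] at this
      exact this.symm
    have hzero2 := hzero s₂ (hsub hs₂) (hclose s₂ hs₂) x₁ (by simpa using hε)
      (V s₂) (habs2 s₂ (hsub hs₂))
    calc f t₀ x₀ v₀ = f s₂ (X s₂) (V s₂) := (hconst s₂ (hsub hs₂)).symm
      _ = f s₂ y (V s₂) := by rw [hXs₂]
      _ = f s₂ x₁ (V s₂) := hshift
      _ = 0 := hzero2

end EnergyAux2

section EnergyAux3
open MeasureTheory intervalIntegral Set

lemma energy_const
    (T : ℝ) (f : ℝ → ℝ → ℝ → ℝ) (E : ℝ → ℝ → ℝ)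
    (hf : ContDiff ℝ 1 (fun p : ℝ × ℝ × ℝ => f p.1 p.2.1 p.2.2))
    (hfper : ∀ t x v : ℝ, f t (x + 2 * Real.pi) v = f t x v)
    (hE : ContDiff ℝ 1 (fun p : ℝ × ℝ => E p.1 p.2))
    (hVlasov : ∀ t ∈ Set.Icc (0 : ℝ) T, ∀ x v : ℝ,
      deriv (fun s => f s x v) t + v * deriv (fun y => f t y v) x
        - E t x * deriv (fun w => f t x w) v = 0)
    (hAmpere : ∀ t ∈ Set.Icc (0 : ℝ) T, ∀ x : ℝ,
      deriv (fun s => E s x) t = ∫ v : ℝ, v * f t x v)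
    (R : ℝ) (hR : 0 < R)
    (hU : ∀ t ∈ Set.Icc (0 : ℝ) T, ∀ x v : ℝ, R ≤ |v| → f t x v = 0) :
    ∀ t ∈ Set.Icc (0 : ℝ) T,
      (1 / 2) * (∫ x in (0 : ℝ)..(2 * Real.pi), ∫ v : ℝ, v ^ 2 * f t x v) +
          (1 / 2) * (∫ x in (0 : ℝ)..(2 * Real.pi), (E t x) ^ 2) =
        (1 / 2) * (∫ x in (0 : ℝ)..(2 * Real.pi), ∫ v : ℝ, v ^ 2 * f 0 x v) +
          (1 / 2) * (∫ x in (0 : ℝ)..(2 * Real.pi), (E 0 x) ^ 2) := by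
  intro t ht
  have hT : (0:ℝ) ≤ T := ht.1.trans ht.2
  have h0T : (0:ℝ) ∈ Set.Icc (0:ℝ) T := ⟨le_refl _, hT⟩
  set R' : ℝ := R + 1 with hR'
  have hRR' : R ≤ |R'| := by rw [abs_of_pos (by linarith)]; linarith
  have hRR'' : R ≤ |-R'| := by rw [abs_neg]; exact hRR'
  have hfc : Continuous (fun p : ℝ × ℝ × ℝ => f p.1 p.2.1 p.2.2) := hf.continuous
  have hEc : Continuous (fun p : ℝ × ℝ => E p.1 p.2) := hE.continuous
  -- the truncated kinetic density
  set H : ℝ → ℝ → ℝ := fun t x => ∫ v in (-R')..R', v ^ 2 * f t x v with hH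
  -- Step 1 : the full-line integrals agree with truncated ones
  have step1 : ∀ s ∈ Set.Icc (0:ℝ) T, ∀ x : ℝ, ∀ (c : ℕ),
      (∫ v : ℝ, v ^ c * f s x v) = ∫ v in (-R')..R', v ^ c * f s x v := by
    intro s hs x c
    rw [intervalIntegral.integral_of_le (by linarith)]
    symm
    apply MeasureTheory.setIntegral_eq_integral_of_forall_compl_eq_zero
    intro v hv
    have : R ≤ |v| := by
      simp only [Set.mem_Ioc, not_and_or, not_lt, not_le] at hv
      rcases hv with h | h
      · rw [abs_of_nonpos (by linarith)]; linarith
      · rw [abs_of_pos (by linarith)]; linarith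
    rw [hU s hs x v this, mul_zero]

  -- continuity helpers
  have hfc3 : ∀ {α : Type} [TopologicalSpace α] (g : α → ℝ × ℝ × ℝ), Continuous g →
      Continuous (fun q => f (g q).1 (g q).2.1 (g q).2.2) := by
    intro α _ g hg; exact hfc.comp hg
  have hptc : Continuous (fun p : ℝ × ℝ × ℝ => pt f p.1 p.2.1 p.2.2) := cont_pt hf
  have hpxc : Continuous (fun p : ℝ × ℝ × ℝ => px f p.1 p.2.1 p.2.2) := cont_px hf
  have hpvc : Continuous (fun p : ℝ × ℝ × ℝ => pv f p.1 p.2.1 p.2.2) := cont_pv hf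
  have hqtc : Continuous (fun p : ℝ × ℝ => qt E p.1 p.2) := cont_qt hE
  -- truncated kinetic time-derivative density
  set Ht : ℝ → ℝ → ℝ := fun t x => ∫ v in (-R')..R', v ^ 2 * pt f t x v with hHt
  have hHcont : Continuous (Function.uncurry H) := by
    apply intervalIntegral.continuous_parametric_intervalIntegral_of_continuous'
      (f := fun (p : ℝ × ℝ) v => v ^ 2 * f p.1 p.2 v)
    exact (continuous_snd.pow 2).mul (hfc3 (fun q : (ℝ × ℝ) × ℝ => (q.1.1, q.1.2, q.2))
      (by fun_prop))
  have hHtcont : Continuous (Function.uncurry Ht) := by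
    apply intervalIntegral.continuous_parametric_intervalIntegral_of_continuous'
      (f := fun (p : ℝ × ℝ) v => v ^ 2 * pt f p.1 p.2 v)
    exact (continuous_snd.pow 2).mul (hptc.comp (by fun_prop :
      Continuous (fun q : (ℝ × ℝ) × ℝ => ((q.1.1, q.1.2, q.2) : ℝ × ℝ × ℝ))))
  -- inner time differentiation
  have hHder : ∀ (t₀ x : ℝ), HasDerivAt (fun s => H s x) (Ht t₀ x) t₀ := by
    intro t₀ x
    apply helperA (G := fun s v => v ^ 2 * f s x v) (D := fun s v => v ^ 2 * pt f s x v)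
    · exact (continuous_snd.pow 2).mul (hfc3 (fun q : ℝ × ℝ => (q.1, x, q.2)) (by fun_prop))
    · exact (continuous_snd.pow 2).mul (hptc.comp (by fun_prop :
        Continuous (fun q : ℝ × ℝ => ((q.1, x, q.2) : ℝ × ℝ × ℝ))))
    · intro s v
      simpa [mul_comm] using (hasDerivAt_pt hf s x v).const_mul (v ^ 2)
  -- outer time differentiation of the kinetic part
  have hKder : ∀ t₀ : ℝ, HasDerivAt (fun s => ∫ x in (0:ℝ)..(2*Real.pi), H s x)
      (∫ x in (0:ℝ)..(2*Real.pi), Ht t₀ x) t₀ := by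
    intro t₀
    exact helperA hHcont hHtcont hHder t₀
  -- time differentiation of the field part
  have hPder : ∀ t₀ : ℝ, HasDerivAt (fun s => ∫ x in (0:ℝ)..(2*Real.pi), (E s x) ^ 2)
      (∫ x in (0:ℝ)..(2*Real.pi), 2 * E t₀ x * qt E t₀ x) t₀ := by
    intro t₀
    apply helperA (G := fun s x => (E s x) ^ 2) (D := fun s x => 2 * E s x * qt E s x)
    · exact (hEc.comp (by fun_prop : Continuous (fun q : ℝ × ℝ => ((q.1, q.2) : ℝ × ℝ)))).pow 2
    · exact (continuous_const.mul (hEc.comp (by fun_prop :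
        Continuous (fun q : ℝ × ℝ => ((q.1, q.2) : ℝ × ℝ))))).mul
        (hqtc.comp (by fun_prop : Continuous (fun q : ℝ × ℝ => ((q.1, q.2) : ℝ × ℝ))))
    · intro s x
      have := (hasDerivAt_qt hE s x).pow 2
      simpa [pow_one, Pi.pow_def] using this
  -- pointwise evaluation of the kinetic derivative density on [0,T]
  have key : ∀ s ∈ Set.Icc (0:ℝ) T,
      (∫ x in (0:ℝ)..(2*Real.pi), Ht s x)
        = -(∫ x in (0:ℝ)..(2*Real.pi), 2 * E s x * qt E s x) := by
    intro s hs
    -- Vlasov pointwise rewriting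
    have vp : ∀ x v : ℝ, pt f s x v = E s x * pv f s x v - v * px f s x v := by
      intro x v
      have h := hVlasov s hs x v
      rw [(hasDerivAt_pt hf s x v).deriv] at h
      rw [(hasDerivAt_px hf s x v).deriv] at h
      rw [(hasDerivAt_pv hf s x v).deriv] at h
      linarith
    set Q : ℝ → ℝ := fun y => ∫ v in (-R')..R', v ^ 3 * px f s y v with hQ
    have hQcont : Continuous Q := by
      apply intervalIntegral.continuous_parametric_intervalIntegral_of_continuous'
        (f := fun (y : ℝ) v => v ^ 3 * px f s y v)
      exact (continuous_snd.pow 3).mul (hpxc.comp (by fun_prop :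
        Continuous (fun q : ℝ × ℝ => ((s, q.1, q.2) : ℝ × ℝ × ℝ))))
    -- integration by parts in v
    have ibp : ∀ x : ℝ, (∫ v in (-R')..R', v ^ 2 * pv f s x v) = -(2 * qt E s x) := by
      intro x
      have h := intervalIntegral.integral_mul_deriv_eq_deriv_mul_of_hasDerivAt
        (a := -R') (b := R') (u := fun v => v ^ 2) (u' := fun v => 2 * v)
        (v := fun w => f s x w) (v' := fun w => pv f s x w)
        (by fun_prop) ((hfc3 (fun w : ℝ => (s, x, w)) (by fun_prop)).continuousOn)
        (fun v _ => by simpa using hasDerivAt_pow 2 v)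
        (fun w _ => hasDerivAt_pv hf s x w)
        ((by fun_prop : Continuous (fun v : ℝ => 2 * v)).intervalIntegrable _ _)
        ((hpvc.comp (by fun_prop :
          Continuous (fun w : ℝ => ((s, x, w) : ℝ × ℝ × ℝ)))).intervalIntegrable _ _)
      rw [hU s hs x R' hRR', hU s hs x (-R') hRR''] at h
      have h2 : (∫ v in (-R')..R', 2 * v * f s x v) = 2 * qt E s x := by
        have : (∫ v in (-R')..R', 2 * v * f s x v) = 2 * ∫ v in (-R')..R', v * f s x v := by
          rw [← intervalIntegral.integral_const_mul]
          congr 1; funext v; ring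
        rw [this]
        have := step1 s hs x 1
        simp only [pow_one] at this
        rw [← this]
        have ha := hAmpere s hs x
        rw [(hasDerivAt_qt hE s x).deriv] at ha
        rw [← ha]
      rw [h2] at h
      rw [h]; ring
    have Ht_eq : ∀ x : ℝ, Ht s x = -(2 * E s x * qt E s x) - Q x := by
      intro x
      have expand : Ht s x = (∫ v in (-R')..R',
          (E s x * (v ^ 2 * pv f s x v) - v ^ 3 * px f s x v)) := by
        apply intervalIntegral.integral_congr
        intro v _
        simp only
        rw [vp x v]; ring
      rw [expand, intervalIntegral.integral_sub, intervalIntegral.integral_const_mul, ibp x]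
      · ring_nf
        rfl
      · apply Continuous.intervalIntegrable
        exact continuous_const.mul ((continuous_id.pow 2).mul (hpvc.comp (by fun_prop :
          Continuous (fun w : ℝ => ((s, x, w) : ℝ × ℝ × ℝ)))))
      · apply Continuous.intervalIntegrable
        exact (continuous_id.pow 3).mul (hpxc.comp (by fun_prop :
          Continuous (fun w : ℝ => ((s, x, w) : ℝ × ℝ × ℝ))))
    -- the pure x-derivative term integrates to zero by periodicity
    have intQ : (∫ x in (0:ℝ)..(2*Real.pi), Q x) = 0 := by
      set q : ℝ → ℝ := fun y => ∫ v in (-R')..R', v ^ 3 * f s y v with hq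
      have hqder : ∀ y : ℝ, HasDerivAt q (Q y) y := by
        intro y
        apply helperA (G := fun y v => v ^ 3 * f s y v) (D := fun y v => v ^ 3 * px f s y v)
        · exact (continuous_snd.pow 3).mul (hfc3 (fun q : ℝ × ℝ => (s, q.1, q.2)) (by fun_prop))
        · exact (continuous_snd.pow 3).mul (hpxc.comp (by fun_prop :
            Continuous (fun q : ℝ × ℝ => ((s, q.1, q.2) : ℝ × ℝ × ℝ))))
        · intro y v
          simpa [mul_comm] using (hasDerivAt_px hf s y v).const_mul (v ^ 3)
      have ftc : (∫ x in (0:ℝ)..(2*Real.pi), Q x) = q (2*Real.pi) - q 0 :=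
        intervalIntegral.integral_eq_sub_of_hasDerivAt (fun y _ => hqder y)
          (hQcont.intervalIntegrable _ _)
      have hper : q (2*Real.pi) = q 0 := by
        simp only [hq]
        congr 1; funext v
        have := hfper s 0 v
        rw [zero_add] at this
        rw [this]
      rw [ftc, hper, sub_self]
    calc (∫ x in (0:ℝ)..(2*Real.pi), Ht s x)
        = ∫ x in (0:ℝ)..(2*Real.pi), (-(2 * E s x * qt E s x) - Q x) := by
          apply intervalIntegral.integral_congr; intro x _; exact Ht_eq x
      _ = (∫ x in (0:ℝ)..(2*Real.pi), -(2 * E s x * qt E s x))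
            - ∫ x in (0:ℝ)..(2*Real.pi), Q x := by
          apply intervalIntegral.integral_sub
          · apply Continuous.intervalIntegrable
            exact ((continuous_const.mul (hEc.comp (by fun_prop :
              Continuous (fun y : ℝ => ((s, y) : ℝ × ℝ))))).mul (hqtc.comp (by fun_prop :
              Continuous (fun y : ℝ => ((s, y) : ℝ × ℝ))))).neg
          · exact hQcont.intervalIntegrable _ _
      _ = -(∫ x in (0:ℝ)..(2*Real.pi), 2 * E s x * qt E s x) := by
          rw [intQ, intervalIntegral.integral_neg, sub_zero]
  -- the total energy function
  set En : ℝ → ℝ := fun s => (1/2) * (∫ x in (0:ℝ)..(2*Real.pi), H s x)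
      + (1/2) * (∫ x in (0:ℝ)..(2*Real.pi), (E s x) ^ 2) with hEn
  have hEnDiff : ∀ s : ℝ, HasDerivAt En
      ((1/2) * (∫ x in (0:ℝ)..(2*Real.pi), Ht s x)
        + (1/2) * (∫ x in (0:ℝ)..(2*Real.pi), 2 * E s x * qt E s x)) s := by
    intro s
    exact ((hKder s).const_mul (1/2:ℝ)).add ((hPder s).const_mul (1/2:ℝ))
  have hEnZero : ∀ s ∈ Set.Icc (0:ℝ) T, HasDerivAt En 0 s := by
    intro s hs
    have := hEnDiff s
    rwa [key s hs, show (1/2 : ℝ) * -(∫ x in (0:ℝ)..(2*Real.pi), 2 * E s x * qt E s x)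
      + (1/2) * (∫ x in (0:ℝ)..(2*Real.pi), 2 * E s x * qt E s x) = 0 by ring] at this
  have hEnConst : ∀ s ∈ Set.Icc (0:ℝ) T, En s = En 0 := by
    apply constant_of_has_deriv_right_zero
    · exact fun s _ => ((hEnDiff s).differentiableAt.continuousAt).continuousWithinAt
    · exact fun s hs => (hEnZero s (Set.Ico_subset_Icc_self hs)).hasDerivWithinAt
  -- conclude
  have conv : ∀ s ∈ Set.Icc (0:ℝ) T,
      (∫ x in (0:ℝ)..(2*Real.pi), ∫ v : ℝ, v ^ 2 * f s x v)
        = ∫ x in (0:ℝ)..(2*Real.pi), H s x := by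
    intro s hs
    apply intervalIntegral.integral_congr
    intro x _
    exact step1 s hs x 2
  have := hEnConst t ht
  simp only [hEn] at this
  rw [conv t ht, conv 0 h0T]
  exact this

end EnergyAux3

/-- If `f` is continuously differentiable, `2π`-periodic in `x`, compactly supported in
`v`, `E` is continuously differentiable and `2π`-periodic in `x`, `f` satisfies the
Vlasov equation `∂f/∂t + v ∂f/∂x - E(t,x) ∂f/∂v = 0` and `E` the Ampère law
`∂E/∂t(t,x) = ∫ v f(t,x,v) dv` on `[0,T]`, then the total energy
`𝓔(t) = (1/2) ∫₀^{2π} ∫_ℝ v² f dv dx + (1/2) ∫₀^{2π} E² dx` is constant on `[0,T]`. -/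
theorem vlasov_total_energy_conservation
    (T : ℝ) (hT : 0 ≤ T) (f : ℝ → ℝ → ℝ → ℝ) (E : ℝ → ℝ → ℝ)
    (hf : ContDiff ℝ 1 (fun p : ℝ × ℝ × ℝ => f p.1 p.2.1 p.2.2))
    (hfper : ∀ t x v : ℝ, f t (x + 2 * Real.pi) v = f t x v)
    (hsupp : ∀ t x : ℝ, HasCompactSupport (fun v => f t x v))
    (hE : ContDiff ℝ 1 (fun p : ℝ × ℝ => E p.1 p.2))
    (hEper : ∀ t x : ℝ, E t (x + 2 * Real.pi) = E t x)
    (hVlasov : ∀ t ∈ Set.Icc (0 : ℝ) T, ∀ x v : ℝ,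
      deriv (fun s => f s x v) t + v * deriv (fun y => f t y v) x
        - E t x * deriv (fun w => f t x w) v = 0)
    (hAmpere : ∀ t ∈ Set.Icc (0 : ℝ) T, ∀ x : ℝ,
      deriv (fun s => E s x) t = ∫ v : ℝ, v * f t x v) :
    ∀ t ∈ Set.Icc (0 : ℝ) T,
      (1 / 2) * (∫ x in (0 : ℝ)..(2 * Real.pi), ∫ v : ℝ, v ^ 2 * f t x v) +
          (1 / 2) * (∫ x in (0 : ℝ)..(2 * Real.pi), (E t x) ^ 2) =
        (1 / 2) * (∫ x in (0 : ℝ)..(2 * Real.pi), ∫ v : ℝ, v ^ 2 * f 0 x v) +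
          (1 / 2) * (∫ x in (0 : ℝ)..(2 * Real.pi), (E 0 x) ^ 2) := by
  intro t ht
  rcases eq_or_lt_of_le hT with h0 | hTpos
  · have ht0 : t = 0 := by
      rw [← h0] at ht
      exact le_antisymm ht.2 ht.1
    rw [ht0]
  · obtain ⟨R, hR, hU⟩ := uniform_support T hTpos f E hf hfper hsupp hE hEper hVlasov
    exact energy_const T f E hf hfper hE hVlasov hAmpere R hR hU t ht
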